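/- With ℤ₂ coefficients: in the 2-complex W = S ∖ (σ₁₁₁ ∪ σ₂₂₂ ∪ σ₃₃₃), where S is the link of the center point in the cube of the tripod T³, the sum of the three boundary loops satisfies [∂σ₁₁₁] + [∂σ₂₂₂] + [∂σ₃₃₃] = 0 in H₁(W; ℤ₂); explicitly, the 2-chain B′ + B″ (where B′ is the sum of σ_ijk over all triples of pairwise distinct indices and B″ = Σᵢ (σ_{ii(i+1)} + σ_{i(i+1)i} + σ_{(i+1)ii}) with indices mod 3) has boundary ∂(B′ + B″) = ∂σ₁₁₁ + ∂σ₂₂₂ + ∂σ₃₃₃ as a ℤ₂ 1-chain. -/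
import Mathlib


/-- Edges of the complex `S`: the edge `(m, a, b)` of a triangle `σ_ijk` is the
side opposite to the slot `m ∈ {0,1,2}`, joining the vertex in the first
remaining slot on leg `a` to the vertex in the second remaining slot on leg `b`. -/
abbrev TripodEdge := Fin 3 × Fin 3 × Fin 3

/-- The `ℤ₂`-boundary of the triangle `σ_ijk` (legs `(i,j,k)` indexed by slot),
as a `ℤ₂` 1-chain on the edges of `S`: the sum of its three sides. -/
def bd (t : Fin 3 × Fin 3 × Fin 3) : TripodEdge → ZMod 2 := fun e =>
  (if e = (0, t.2.1, t.2.2) then 1 else 0) +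
  (if e = (1, t.1, t.2.2) then 1 else 0) +
  (if e = (2, t.1, t.2.1) then 1 else 0)

/-- In `W = S ∖ (σ₁₁₁ ∪ σ₂₂₂ ∪ σ₃₃₃)`, the `ℤ₂` 2-chain `B′ + B″` — where `B′`
is the sum of the `σ_ijk` over all triples of pairwise distinct indices and
`B″ = Σᵢ (σ_{ii(i+1)} + σ_{i(i+1)i} + σ_{(i+1)ii})` (indices mod 3) — has
boundary `∂σ₁₁₁ + ∂σ₂₂₂ + ∂σ₃₃₃`; hence `[∂σ₁₁₁] + [∂σ₂₂₂] + [∂σ₃₃₃] = 0` in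
`H₁(W; ℤ₂)`. -/
theorem boundary_sum_of_diagonal_triangles :
    (∑ t ∈ Finset.univ.filter
        (fun t : Fin 3 × Fin 3 × Fin 3 =>
          t.1 ≠ t.2.1 ∧ t.1 ≠ t.2.2 ∧ t.2.1 ≠ t.2.2), bd t) +
      (∑ i : Fin 3, (bd (i, i, i + 1) + bd (i, i + 1, i) + bd (i + 1, i, i))) =
    bd (0, 0, 0) + bd (1, 1, 1) + bd (2, 2, 2) := by
  funext e
  simp only [Finset.sum_apply, Pi.add_apply]
  rw [Finset.sum_filter]
  fin_cases e <;> decide
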